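/- For every continuously differentiable function g on [0,1] (with values in ℝ or ℂ), one has ∫₀¹ |g(r)|² r dr ≤ ∫₀¹ |(d/dr)(r g(r))|² (1/r) dr. -/

import Mathlib

open MeasureTheory Set
open scoped ENNReal

/-- Poincaré type inequality: for a C¹ function `g` on `[0,1]`,
`∫₀¹ |g(r)|² r dr ≤ ∫₀¹ |(d/dr)(r g(r))|² (1/r) dr`. -/
theorem stmt0 (g : ℝ → ℂ) (hg : ContDiffOn ℝ 1 g (Icc (0:ℝ) 1)) :
    (∫⁻ r in Ioo (0:ℝ) 1, ENNReal.ofReal (‖g r‖ ^ 2 * r)) ≤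
      ∫⁻ r in Ioo (0:ℝ) 1,
        ENNReal.ofReal (‖derivWithin (fun s : ℝ => (s : ℂ) * g s) (Icc (0:ℝ) 1) r‖ ^ 2 / r) := by
  set h : ℝ → ℂ := fun s : ℝ => (s : ℂ) * g s with hh
  set f : ℝ → ℂ := derivWithin h (Icc (0:ℝ) 1) with hf
  set C : ℝ≥0∞ := ∫⁻ r in Ioo (0:ℝ) 1, ENNReal.ofReal (‖f r‖ ^ 2 / r) with hC
  have hcd : ContDiffOn ℝ 1 h (Icc (0:ℝ) 1) :=
    (Complex.ofRealCLM.contDiff.contDiffOn (s := Icc (0:ℝ) 1)).mul hg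
  have hf_cont : ContinuousOn f (Icc (0:ℝ) 1) :=
    hcd.continuousOn_derivWithin (uniqueDiffOn_Icc one_pos) le_rfl
  have hdiff : ∀ s ∈ Ioo (0:ℝ) 1, HasDerivAt h (f s) s := by
    intro s hs
    have hnh : Icc (0:ℝ) 1 ∈ nhds s := Icc_mem_nhds hs.1 hs.2
    have hda : DifferentiableAt ℝ h s :=
      ((hcd.differentiableOn one_ne_zero) s (Ioo_subset_Icc_self hs)).differentiableAt hnh
    have : f s = deriv h s := derivWithin_of_mem_nhds hnh
    rw [this]
    exact hda.hasDerivAt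
  -- key pointwise estimate
  have key : ∀ r ∈ Ioo (0:ℝ) 1,
      ENNReal.ofReal (‖g r‖ ^ 2 * r) ≤ ENNReal.ofReal (r / 2) * C := by
    intro r hr
    have hr0 : (0:ℝ) < r := hr.1
    have hr1 : r < 1 := hr.2
    have hsub : Icc (0:ℝ) r ⊆ Icc (0:ℝ) 1 := Icc_subset_Icc le_rfl hr1.le
    -- FTC
    have hfi : IntervalIntegrable f volume 0 r := by
      apply ContinuousOn.intervalIntegrable
      rw [uIcc_of_le hr0.le]
      exact hf_cont.mono hsub
    have hftc : h r = ∫ s in (0:ℝ)..r, f s := by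
      have := intervalIntegral.integral_eq_sub_of_hasDerivAt_of_le hr0.le
        (hcd.continuousOn.mono hsub)
        (fun x hx => hdiff x ⟨hx.1, hx.2.trans hr1⟩) hfi
      have h0 : h 0 = 0 := by simp [hh]
      rw [this, h0, sub_zero]
    have hnorm : ‖h r‖ ≤ ∫ s in (0:ℝ)..r, ‖f s‖ := by
      rw [hftc]
      exact intervalIntegral.norm_integral_le_integral_norm hr0.le
    -- convert to lintegral
    have hnfi : IntegrableOn (fun s => ‖f s‖) (Ioc (0:ℝ) r) :=
      ((hf_cont.mono hsub).norm.integrableOn_Icc).mono_set Ioc_subset_Icc_self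
    have hof : ENNReal.ofReal (∫ s in (0:ℝ)..r, ‖f s‖)
        = ∫⁻ s in Ioc (0:ℝ) r, ENNReal.ofReal ‖f s‖ := by
      rw [intervalIntegral.integral_of_le hr0.le]
      exact ofReal_integral_eq_lintegral_ofReal hnfi
        (Filter.Eventually.of_forall fun s => norm_nonneg _)
    have hIle : ENNReal.ofReal ‖h r‖ ≤ ∫⁻ s in Ioc (0:ℝ) r, ENNReal.ofReal ‖f s‖ := by
      rw [← hof]; exact ENNReal.ofReal_le_ofReal hnorm
    -- Cauchy-Schwarz
    have hfm : AEMeasurable f (volume.restrict (Ioc (0:ℝ) r)) :=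
      (hf_cont.mono (hsub.trans' Ioc_subset_Icc_self)).aemeasurable measurableSet_Ioc
    have hpq : Real.HolderConjugate 2 2 := Real.HolderConjugate.two_two
    have hCS := ENNReal.lintegral_mul_le_Lp_mul_Lq (volume.restrict (Ioc (0:ℝ) r)) hpq
      (f := fun s => ENNReal.ofReal (Real.sqrt s))
      (g := fun s => ENNReal.ofReal (‖f s‖ / Real.sqrt s))
      (Real.continuous_sqrt.measurable.ennreal_ofReal.aemeasurable)
      ((hfm.norm.div (Real.continuous_sqrt.measurable.aemeasurable)).ennreal_ofReal)
    have hsplit : (∫⁻ s in Ioc (0:ℝ) r, ENNReal.ofReal ‖f s‖)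
        = ∫⁻ s in Ioc (0:ℝ) r,
            (fun s => ENNReal.ofReal (Real.sqrt s)) s *
              (fun s => ENNReal.ofReal (‖f s‖ / Real.sqrt s)) s := by
      apply setLIntegral_congr_fun measurableSet_Ioc
      intro s hs
      beta_reduce
      have hs0 : (0:ℝ) < s := hs.1
      have hsq : Real.sqrt s ≠ 0 := ne_of_gt (Real.sqrt_pos.mpr hs0)
      rw [← ENNReal.ofReal_mul (Real.sqrt_nonneg s), mul_div_cancel₀ _ hsq]
    have hA : (∫⁻ s in Ioc (0:ℝ) r, (ENNReal.ofReal (Real.sqrt s)) ^ (2:ℝ))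
        = ENNReal.ofReal (r ^ 2 / 2) := by
      have h1 : ∀ s ∈ Ioc (0:ℝ) r,
          (ENNReal.ofReal (Real.sqrt s)) ^ (2:ℝ) = ENNReal.ofReal s := by
        intro s hs
        rw [ENNReal.ofReal_rpow_of_nonneg (Real.sqrt_nonneg s) (by norm_num : (0:ℝ) ≤ 2)]
        congr 1
        rw [show ((2:ℝ)) = ((2:ℕ):ℝ) by norm_num, Real.rpow_natCast, Real.sq_sqrt hs.1.le]
      rw [setLIntegral_congr_fun measurableSet_Ioc h1]
      have hint : IntegrableOn (fun s : ℝ => s) (Ioc (0:ℝ) r) :=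
        (continuous_id'.continuousOn.integrableOn_Icc (f := fun s : ℝ => s)).mono_set
          Ioc_subset_Icc_self
      have hnn : (0:ℝ → ℝ) ≤ᵐ[volume.restrict (Ioc (0:ℝ) r)] fun s => s :=
        ae_restrict_of_forall_mem measurableSet_Ioc (fun s hs => hs.1.le)
      rw [← ofReal_integral_eq_lintegral_ofReal hint hnn]
      congr 1
      rw [← intervalIntegral.integral_of_le hr0.le, integral_id]
      ring
    have hB : (∫⁻ s in Ioc (0:ℝ) r, (ENNReal.ofReal (‖f s‖ / Real.sqrt s)) ^ (2:ℝ)) ≤ C := by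
      have h1 : ∀ s ∈ Ioc (0:ℝ) r,
          (ENNReal.ofReal (‖f s‖ / Real.sqrt s)) ^ (2:ℝ)
            = ENNReal.ofReal (‖f s‖ ^ 2 / s) := by
        intro s hs
        rw [ENNReal.ofReal_rpow_of_nonneg (div_nonneg (norm_nonneg _) (Real.sqrt_nonneg s))
          (by norm_num : (0:ℝ) ≤ 2)]
        congr 1
        rw [show ((2:ℝ)) = ((2:ℕ):ℝ) by norm_num, Real.rpow_natCast, div_pow,
          Real.sq_sqrt hs.1.le]
      rw [setLIntegral_congr_fun measurableSet_Ioc h1]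
      exact lintegral_mono_set (fun x hx => ⟨hx.1, lt_of_le_of_lt hx.2 hr1⟩)
    -- combine
    have hsq : (ENNReal.ofReal ‖h r‖) ^ (2:ℕ) ≤ ENNReal.ofReal (r ^ 2 / 2) * C := by
      calc (ENNReal.ofReal ‖h r‖) ^ (2:ℕ)
          ≤ (∫⁻ s in Ioc (0:ℝ) r, ENNReal.ofReal ‖f s‖) ^ (2:ℕ) := by gcongr
        _ ≤ ((∫⁻ s in Ioc (0:ℝ) r, (ENNReal.ofReal (Real.sqrt s)) ^ (2:ℝ)) ^ ((1:ℝ)/2)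
              * (∫⁻ s in Ioc (0:ℝ) r,
                  (ENNReal.ofReal (‖f s‖ / Real.sqrt s)) ^ (2:ℝ)) ^ ((1:ℝ)/2)) ^ (2:ℕ) := by
            gcongr
            rw [hsplit]
            exact hCS
        _ = (∫⁻ s in Ioc (0:ℝ) r, (ENNReal.ofReal (Real.sqrt s)) ^ (2:ℝ))
              * (∫⁻ s in Ioc (0:ℝ) r, (ENNReal.ofReal (‖f s‖ / Real.sqrt s)) ^ (2:ℝ)) := by
            rw [mul_pow, ← ENNReal.rpow_natCast (_ ^ _) 2, ← ENNReal.rpow_natCast (_ ^ _) 2,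
              ← ENNReal.rpow_mul, ← ENNReal.rpow_mul]
            norm_num
        _ ≤ ENNReal.ofReal (r ^ 2 / 2) * C := by rw [hA]; gcongr
    have hl : ENNReal.ofReal (‖g r‖ ^ 2 * r) * ENNReal.ofReal r
        = (ENNReal.ofReal ‖h r‖) ^ (2:ℕ) := by
      rw [← ENNReal.ofReal_mul (by positivity), ← ENNReal.ofReal_pow (norm_nonneg _)]
      congr 1
      have : ‖h r‖ = r * ‖g r‖ := by
        simp [hh, Complex.norm_real, abs_of_pos hr0]
      rw [this]; ring
    have hrr : ENNReal.ofReal (r ^ 2 / 2) = ENNReal.ofReal (r / 2) * ENNReal.ofReal r := by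
      rw [← ENNReal.ofReal_mul (by positivity)]
      congr 1; ring
    have hmain : ENNReal.ofReal (‖g r‖ ^ 2 * r) * ENNReal.ofReal r
        ≤ (ENNReal.ofReal (r / 2) * C) * ENNReal.ofReal r := by
      rw [hl]
      calc (ENNReal.ofReal ‖h r‖) ^ (2:ℕ) ≤ ENNReal.ofReal (r ^ 2 / 2) * C := hsq
        _ = (ENNReal.ofReal (r / 2) * C) * ENNReal.ofReal r := by rw [hrr]; ring
    exact (ENNReal.mul_le_mul_iff_left (ENNReal.ofReal_pos.mpr hr0).ne' ENNReal.ofReal_ne_top).mp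
      hmain
  -- integrate
  calc (∫⁻ r in Ioo (0:ℝ) 1, ENNReal.ofReal (‖g r‖ ^ 2 * r))
      ≤ ∫⁻ r in Ioo (0:ℝ) 1, ENNReal.ofReal (r / 2) * C :=
        setLIntegral_mono ((measurable_id.div_const 2).ennreal_ofReal.mul_const C) key
    _ = (∫⁻ r in Ioo (0:ℝ) 1, ENNReal.ofReal (r / 2)) * C :=
        lintegral_mul_const C (measurable_id.div_const 2).ennreal_ofReal
    _ ≤ 1 * C := by
        apply mul_le_mul_left
        calc (∫⁻ r in Ioo (0:ℝ) 1, ENNReal.ofReal (r / 2))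
            ≤ ∫⁻ _ in Ioo (0:ℝ) 1, (1:ℝ≥0∞) :=
              setLIntegral_mono measurable_const (fun x hx => by
                rw [show (1:ℝ≥0∞) = ENNReal.ofReal 1 by simp]
                exact ENNReal.ofReal_le_ofReal (by nlinarith [hx.1, hx.2]))
          _ = 1 := by simp [Real.volume_Ioo]
    _ = C := one_mul C
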